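/- The function g ↦ g·ψ'(g), where ψ' is the trigamma function, is strictly decreasing on the positive integers; in particular for all integers g ≥ 1, (g+1)·ψ'(g+1) < g·ψ'(g). -/

import Mathlib

/-- The trigamma function, `ψ'(x) = ∑_{k≥0} 1/(x+k)²`. -/
noncomputable def trigamma (x : ℝ) : ℝ := ∑' k : ℕ, 1 / (x + k) ^ 2

lemma summable_trigamma_aux {x : ℝ} (hx : 1 ≤ x) :
    Summable (fun k : ℕ => 1 / (x + k) ^ 2) := by
  have h2 : Summable (fun k : ℕ => 1 / ((k : ℝ) + 1) ^ 2) := by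
    have := (summable_nat_add_iff (f := fun n : ℕ => 1 / (n : ℝ) ^ 2) 1).mpr
      (Real.summable_one_div_nat_pow.mpr one_lt_two)
    simpa using this
  apply h2.of_nonneg_of_le (fun k => by positivity)
  intro k
  apply one_div_le_one_div_of_le (by positivity)
  have hk : ((k : ℝ) + 1) ≤ x + k := by linarith
  nlinarith [Nat.cast_nonneg (α := ℝ) k]

lemma hasSum_telescope_aux {x : ℝ} (hx : 0 < x) :
    HasSum (fun k : ℕ => 1 / (x + k) - 1 / (x + k + 1)) (1 / x) := by
  have hnn : ∀ k : ℕ, 0 ≤ 1 / (x + k) - 1 / (x + k + 1) := by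
    intro k
    have h1 : (0:ℝ) < x + k := by positivity
    have : 1 / (x + k + 1) ≤ 1 / (x + k) := one_div_le_one_div_of_le h1 (by linarith)
    linarith
  rw [hasSum_iff_tendsto_nat_of_nonneg hnn]
  have hsum : ∀ n : ℕ, ∑ i ∈ Finset.range n, (1 / (x + i) - 1 / (x + i + 1))
      = 1 / x - 1 / (x + n) := by
    intro n
    have h := Finset.sum_range_sub' (f := fun i : ℕ => 1 / (x + (i:ℝ))) n
    push_cast at h
    simpa [add_assoc] using h
  simp only [hsum]
  have h1 : Filter.Tendsto (fun n : ℕ => 1 / (x + n)) Filter.atTop (nhds 0) := by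
    simp only [one_div]
    exact Filter.Tendsto.inv_tendsto_atTop
      (Filter.tendsto_atTop_add_const_left _ x tendsto_natCast_atTop_atTop)
  have := Filter.Tendsto.sub (tendsto_const_nhds (x := 1 / x) (f := Filter.atTop (α := ℕ))) h1
  simpa using this

lemma trigamma_add_one_lt {x : ℝ} (hx : 0 < x) : trigamma (x + 1) < 1 / x := by
  have hT := hasSum_telescope_aux hx
  rw [trigamma, ← hT.tsum_eq]
  have hs : Summable (fun k : ℕ => 1 / (x + 1 + k) ^ 2) :=
    summable_trigamma_aux (by linarith)
  have key : ∀ k : ℕ, 1 / (x + 1 + (k:ℝ)) ^ 2 < 1 / (x + k) - 1 / (x + k + 1) := by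
    intro k
    have h1 : (0:ℝ) < x + k := by positivity
    have h2 : (0:ℝ) < x + k + 1 := by linarith
    have heq : 1 / (x + (k:ℝ)) - 1 / (x + k + 1) = 1 / ((x + k) * (x + k + 1)) := by
      field_simp
      ring
    rw [heq, show x + 1 + (k:ℝ) = x + k + 1 by ring]
    apply one_div_lt_one_div_of_lt (by positivity)
    nlinarith
  exact Summable.tsum_lt_tsum (fun k => (key k).le) (key 0) hs hT.summable

lemma trigamma_rec {x : ℝ} (hx : 1 ≤ x) :
    trigamma x = 1 / x ^ 2 + trigamma (x + 1) := by
  have h := summable_trigamma_aux hx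
  rw [trigamma, Summable.tsum_eq_zero_add h]
  simp only [Nat.cast_zero, add_zero]
  congr 1
  rw [trigamma]
  apply tsum_congr
  intro k
  push_cast
  ring_nf

/-- `g ↦ g·ψ'(g)` is strictly decreasing on the positive integers. -/
theorem mul_trigamma_strict_anti (g : ℕ) (hg : 1 ≤ g) :
    ((g : ℝ) + 1) * trigamma ((g : ℝ) + 1) < (g : ℝ) * trigamma (g : ℝ) := by
  have hg1 : (1:ℝ) ≤ g := by exact_mod_cast hg
  have hg0 : (0:ℝ) < g := by linarith
  have hlt := trigamma_add_one_lt hg0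
  have he : (g:ℝ) * (1 / (g:ℝ) ^ 2 + trigamma ((g:ℝ) + 1))
      = 1 / (g:ℝ) + (g:ℝ) * trigamma ((g:ℝ) + 1) := by
    field_simp
  rw [trigamma_rec hg1, he]
  nlinarith [hlt]
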